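/- arXiv:1608.07891 — 2 statements merged into one kernel-verified Lean document; each statement's English description precedes it below -/
import Mathlib

section
/- Let N ≥ 2 be an integer and T ≥ 1 a real number. Set B = (4.5 · N · log N)^(−1/3) and let τ = ⌈B · T^(1/3)⌉. Then τ · √(4.5 · (T/τ) · N · log N) + T/τ + τ ≤ 2 · B⁻¹ · T^(2/3) + (B + B⁻²) · T^(1/3) + 1. (This is the arithmetic content of Theorem 1: combining the any-time EXP3 regret bound R(T) ≤ √(4.5 · T · N · log N) with the batching reduction R'(T) ≤ τ·R(T/τ) + T/τ + τ for a 1-memory-bounded adversary yields the BREW regret bound R(T) ≤ 2B⁻¹T^(2/3) + (B + B⁻²)T^(1/3) + 1.) -/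
/-- Arithmetic content of Theorem 1 (BREW regret bound): with
`B = (4.5 · N · log N)^(-1/3)` and batch size `τ = ⌈B · T^(1/3)⌉`,
`τ·√(4.5·(T/τ)·N·log N) + T/τ + τ ≤ 2B⁻¹T^(2/3) + (B + B⁻²)T^(1/3) + 1`. -/
theorem brew_regret_arith (N : ℕ) (hN : 2 ≤ N) (T : ℝ) (hT : 1 ≤ T)
    (B : ℝ) (hB : B = (4.5 * (N : ℝ) * Real.log N) ^ (-(1 : ℝ) / 3))
    (τ : ℝ) (hτ : τ = ((⌈B * T ^ ((1 : ℝ) / 3)⌉ : ℤ) : ℝ)) :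
    τ * Real.sqrt (4.5 * (T / τ) * (N : ℝ) * Real.log N) + T / τ + τ ≤
      2 * B⁻¹ * T ^ ((2 : ℝ) / 3) + (B + B⁻¹ ^ 2) * T ^ ((1 : ℝ) / 3) + 1 := by
  have hT0 : (0:ℝ) < T := by linarith
  have hN1 : (1:ℝ) < (N:ℝ) := by exact_mod_cast Nat.lt_of_lt_of_le one_lt_two hN
  have hL : 0 < Real.log N := Real.log_pos hN1
  set C : ℝ := 4.5 * (N : ℝ) * Real.log N with hCdef
  have hC : 0 < C := by
    have : (0:ℝ) < (N:ℝ) := by linarith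
    positivity
  set x : ℝ := T ^ ((1:ℝ)/3) with hxdef
  set b : ℝ := C ^ ((1:ℝ)/3) with hbdef
  have hx0 : 0 < x := Real.rpow_pos_of_pos hT0 _
  have hb0 : 0 < b := Real.rpow_pos_of_pos hC _
  have hx1 : 1 ≤ x := by
    have := Real.rpow_le_rpow (by norm_num : (0:ℝ) ≤ 1) hT (by norm_num : (0:ℝ) ≤ 1/3)
    rwa [Real.one_rpow] at this
  have hx3 : x ^ (3:ℕ) = T := by
    rw [hxdef, ← Real.rpow_natCast (T ^ ((1:ℝ)/3)) 3, ← Real.rpow_mul hT0.le]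
    norm_num
  have hb3 : b ^ (3:ℕ) = C := by
    rw [hbdef, ← Real.rpow_natCast (C ^ ((1:ℝ)/3)) 3, ← Real.rpow_mul hC.le]
    norm_num
  have hx2 : T ^ ((2:ℝ)/3) = x ^ (2:ℕ) := by
    rw [hxdef, ← Real.rpow_natCast (T ^ ((1:ℝ)/3)) 2, ← Real.rpow_mul hT0.le]
    norm_num
  have hB' : B = b⁻¹ := by
    rw [hB, hbdef, show (-(1:ℝ)/3) = -(1/3) by norm_num, Real.rpow_neg hC.le]
  have hB0 : 0 < B := by rw [hB']; positivity
  have hBinv : B⁻¹ = b := by rw [hB', inv_inv]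
  have hbB : b * B = 1 := by rw [hB']; exact mul_inv_cancel₀ hb0.ne'
  have hτl : B * x ≤ τ := by rw [hτ]; exact Int.le_ceil _
  have hτu : τ ≤ B * x + 1 := by rw [hτ]; exact (Int.ceil_lt_add_one _).le
  have hτ0 : 0 < τ := lt_of_lt_of_le (by positivity) hτl
  -- bound b*τ
  have hτub : b * τ ≤ x + b := by
    have h := mul_le_mul_of_nonneg_left hτu hb0.le
    nlinarith [hbB]
  -- rewrite the sqrt argument
  have harg : 4.5 * (T / τ) * (N : ℝ) * Real.log N = C * T / τ := by
    rw [hCdef]; ring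
  rw [harg]
  -- τ * sqrt(C*T/τ) = sqrt(C*T*τ)
  have h1 : τ * Real.sqrt (C * T / τ) = Real.sqrt (C * T * τ) := by
    rw [show C * T * τ = τ^2 * (C * T / τ) by field_simp,
      Real.sqrt_mul (sq_nonneg τ), Real.sqrt_sq hτ0.le]
  rw [h1]
  have h2 : Real.sqrt (C * T * τ) ≤ b * x^2 + b^2 * x := by
    rw [show b * x^2 + b^2 * x = Real.sqrt ((b * x^2 + b^2 * x)^2) from
      (Real.sqrt_sq (by positivity)).symm]
    apply Real.sqrt_le_sqrt
    rw [← hb3, ← hx3]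
    have h := mul_le_mul_of_nonneg_left hτub (show (0:ℝ) ≤ b^2 * x^3 by positivity)
    nlinarith [pow_pos hb0 3, pow_pos hx0 3, mul_pos (pow_pos hb0 4) (pow_pos hx0 2)]
  have h4 : T / τ ≤ b * x^2 := by
    rw [div_le_iff₀ hτ0]
    have heq : b * x^2 * (B * x) = x^3 := by
      have h : b * x^2 * (B * x) = (b * B) * x^3 := by ring
      rw [h, hbB, one_mul]
    have hmul := mul_le_mul_of_nonneg_left hτl (show (0:ℝ) ≤ b * x^2 by positivity)
    rw [← hx3]
    linarith [hmul, heq]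
  rw [hx2, hBinv]
  linarith [h2, h4, hτu]
end

section
/- Define reward sequences for two arms by R_1(1)=0.9, R_1(2)=0.6; R_2(1)=0.4, R_2(2)=0.6; and R_t(1)=0.9, R_t(2)=0.6 for all t ≥ 3, with threshold θ = 0.5. Define the 3GPP threshold-handover policy by a_1 = 1 if R_1(1) ≥ R_1(2) and a_1 = 2 otherwise; and for t ≥ 2, a_t = a_{t−1} if R_t(a_{t−1}) ≥ θ, and otherwise a_t is the arm maximizing R_t(·). Then a_1 = 1 and a_t = 2 for all t ≥ 2, so for every integer T ≥ 2 the cumulative regret of the policy with respect to the best fixed arm satisfies Σ_{t=1}^{T} R_t(1) − Σ_{t=1}^{T} R_t(a_t) = 0.3·T − 0.8, which grows linearly in T. (Non-stochastic part of the proof of Proposition 1: the 3GPP handover protocol achieves regret Ω(T) under a non-stochastic reward model even with zero handover cost.) -/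
/-- Non-stochastic part of the proof of Proposition 1: on the explicit two-arm reward
sequence (arm `0` is SBS 1, arm `1` is SBS 2) with threshold `θ = 0.5`, the 3GPP
threshold-handover policy selects arm `0` at slot 1 and arm `1` at every slot `t ≥ 2`,
so its regret with respect to the best fixed arm is `0.3·T − 0.8`, linear in `T`. -/
theorem threegpp_linear_regret (R : ℕ → Fin 2 → ℝ)
    (h11 : R 1 0 = 0.9) (h12 : R 1 1 = 0.6)
    (h21 : R 2 0 = 0.4) (h22 : R 2 1 = 0.6)
    (h3 : ∀ t, 3 ≤ t → R t 0 = 0.9 ∧ R t 1 = 0.6)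
    (θ : ℝ) (hθ : θ = 0.5)
    (a : ℕ → Fin 2)
    (ha1 : a 1 = if R 1 1 ≤ R 1 0 then 0 else 1)
    (hat : ∀ t, 2 ≤ t →
      a t = if θ ≤ R t (a (t - 1)) then a (t - 1)
            else if R t 1 ≤ R t 0 then 0 else 1) :
    a 1 = 0 ∧ (∀ t, 2 ≤ t → a t = 1) ∧
      ∀ T : ℕ, 2 ≤ T →
        (∑ t ∈ Finset.Icc 1 T, R t 0) - (∑ t ∈ Finset.Icc 1 T, R t (a t)) =
          0.3 * (T : ℝ) - 0.8 := by
  have ha1' : a 1 = 0 := by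
    rw [ha1, if_pos]; rw [h11, h12]; norm_num
  have ha2 : a 2 = 1 := by
    have := hat 2 le_rfl
    simp only [show (2:ℕ) - 1 = 1 from rfl, ha1', h21, h22, hθ] at this
    rw [if_neg (by norm_num), if_neg (by norm_num)] at this
    exact this
  have hall : ∀ t, 2 ≤ t → a t = 1 := by
    intro t ht
    induction t with
    | zero => omega
    | succ n ih =>
      rcases Nat.lt_or_ge n 2 with hn | hn
      · interval_cases n
        · omega
        · exact ha2
      · have han : a n = 1 := ih hn
        have hn3 : 3 ≤ n + 1 := by omega
        have := hat (n+1) (by omega)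
        simp only [Nat.add_sub_cancel, han, (h3 (n+1) hn3).2, hθ] at this
        rw [if_pos (by norm_num)] at this
        exact this
  refine ⟨ha1', hall, ?_⟩
  intro T hT
  induction T with
  | zero => omega
  | succ n ih =>
    rcases Nat.lt_or_ge n 2 with hn | hn
    · interval_cases n
      · omega
      · simp [Finset.sum_Icc_succ_top, ha1', ha2, h11, h21, h22]
        norm_num
    · have hsum := ih hn
      rw [Finset.sum_Icc_succ_top (by omega), Finset.sum_Icc_succ_top (by omega),
        hall (n+1) (by omega), (h3 (n+1) (by omega)).1, (h3 (n+1) (by omega)).2]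
      push_cast
      linarith
end
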